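/- arXiv:1902.01713 — 2 statements merged into one kernel-verified Lean document; each statement's English description precedes it below -/
import Mathlib

section
/- Let α ∈ (1,2) and let (M_n)_{n≥1} be the GEM weights of the Poisson–Dirichlet(1/α, 1 − 1/α) distribution as in the context. Then there exist a constant c > 0 and an integer k₀ such that for all k ≥ k₀, the expectation satisfies E[M_k] ≥ c·k^{−α}. -/
open MeasureTheory ProbabilityTheory Finset
open scoped ENNReal

/-- The Beta distribution on `[0,1]` with parameters `a, b`, defined via its density
`x^(a-1) (1-x)^(b-1) / B(a,b)` with respect to Lebesgue measure on `[0,1]`,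
where `B(a,b) = Γ(a)Γ(b)/Γ(a+b)`. -/
noncomputable def betaMeasure' (a b : ℝ) : Measure ℝ :=
  (volume.restrict (Set.Icc (0:ℝ) 1)).withDensity fun x =>
    ENNReal.ofReal (x ^ (a - 1) * (1 - x) ^ (b - 1) /
      (Real.Gamma a * Real.Gamma b / Real.Gamma (a + b)))

open scoped NNReal

lemma real_beta {u v : ℝ} (hu : 0 < u) (hv : 0 < v) :
    ∫ x in Set.Icc (0:ℝ) 1, x ^ (u-1) * (1-x) ^ (v-1) =
      Real.Gamma u * Real.Gamma v / Real.Gamma (u+v) := by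
  have h1 : Complex.betaIntegral u v =
      ((∫ x in (0:ℝ)..1, x ^ (u-1) * (1-x) ^ (v-1) : ℝ) : ℂ) := by
    rw [Complex.betaIntegral, ← intervalIntegral.integral_ofReal]
    refine intervalIntegral.integral_congr fun x hx => ?_
    rw [Set.uIcc_of_le zero_le_one] at hx
    push_cast
    rw [Complex.ofReal_cpow hx.1, Complex.ofReal_cpow (by linarith [hx.2])]
    push_cast
    ring_nf
  have h2 := Complex.Gamma_mul_Gamma_eq_betaIntegral
    (s := (u:ℂ)) (t := (v:ℂ)) (by simpa using hu) (by simpa using hv)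
  rw [h1] at h2
  have h3 : ((u:ℂ) + v) = ((u + v : ℝ) : ℂ) := by push_cast; ring
  rw [h3, Complex.Gamma_ofReal, Complex.Gamma_ofReal, Complex.Gamma_ofReal] at h2
  have h4 : Real.Gamma u * Real.Gamma v =
      Real.Gamma (u+v) * ∫ x in (0:ℝ)..1, x ^ (u-1) * (1-x) ^ (v-1) := by
    exact_mod_cast h2
  have h5 : Real.Gamma (u+v) ≠ 0 := (Real.Gamma_pos_of_pos (by linarith)).ne'
  rw [MeasureTheory.integral_Icc_eq_integral_Ioc,
    ← intervalIntegral.integral_of_le zero_le_one]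
  field_simp [h4]
  linarith [h4]

lemma betaMeasure_moment {a b : ℝ} (ha : 0 < a) (hb : 0 < b) :
    ∫ x, x ∂(betaMeasure' a b) = a / (a + b) := by
  set C : ℝ := Real.Gamma a * Real.Gamma b / Real.Gamma (a + b) with hC
  have hGa := Real.Gamma_pos_of_pos ha
  have hGb := Real.Gamma_pos_of_pos hb
  have hGab := Real.Gamma_pos_of_pos (show (0:ℝ) < a + b by linarith)
  have hCpos : 0 < C := by positivity
  set d : ℝ → ℝ := fun x => x ^ (a - 1) * (1 - x) ^ (b - 1) / C with hd
  have hdm : Measurable fun x => (d x).toNNReal := by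
    apply Measurable.real_toNNReal
    exact ((measurable_id.pow_const _).mul
      ((measurable_const.sub measurable_id).pow_const _)).div_const _
  have h0 : betaMeasure' a b =
      (volume.restrict (Set.Icc (0:ℝ) 1)).withDensity fun x => ((d x).toNNReal : ℝ≥0∞) := by
    simp only [betaMeasure', ENNReal.ofReal, hd]
    rfl
  rw [h0, integral_withDensity_eq_integral_smul hdm]
  have h1 : ∫ x in Set.Icc (0:ℝ) 1, (d x).toNNReal • x
      = ∫ x in Set.Icc (0:ℝ) 1, (x ^ ((a+1)-1) * (1-x) ^ (b-1)) / C := by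
    refine setIntegral_congr_fun measurableSet_Icc fun x hx => ?_
    have hx0 : (0:ℝ) ≤ x := hx.1
    have hx1 : (0:ℝ) ≤ 1 - x := by linarith [hx.2]
    have hd0 : 0 ≤ d x := by
      apply div_nonneg _ hCpos.le
      exact mul_nonneg (Real.rpow_nonneg hx0 _) (Real.rpow_nonneg hx1 _)
    rw [NNReal.smul_def, smul_eq_mul, Real.coe_toNNReal _ hd0, hd]
    have hxa : x ^ ((a+1)-1) = x ^ (a-1) * x := by
      rcases eq_or_lt_of_le hx0 with h | h
      · rw [← h]
        rw [Real.zero_rpow (by linarith : (a+1)-1 ≠ 0), mul_zero]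
      · rw [show (a+1)-1 = (a-1)+1 by ring, Real.rpow_add_one h.ne']
    rw [hxa]; ring
  rw [h1, integral_div, real_beta (by linarith) hb,
    Real.Gamma_add_one ha.ne', show a + 1 + b = (a+b) + 1 by ring,
    Real.Gamma_add_one (by positivity : a + b ≠ 0)]
  field_simp [hC]
  ring
  rw [hC]; field_simp

lemma integral_prod_indep {Ω : Type*} [MeasurableSpace Ω] (P : Measure Ω)
    [IsProbabilityMeasure P] (Y : ℕ → Ω → ℝ)
    (hindep : iIndepFun Y P)
    (hm : ∀ i, Measurable (Y i)) (s : Finset ℕ) :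
    ∫ ω, ∏ i ∈ s, Y i ω ∂P = ∏ i ∈ s, ∫ ω, Y i ω ∂P := by
  classical
  induction s using Finset.induction_on with
  | empty => simp
  | insert _ _ ha ih =>
    rename_i a t
    rw [Finset.prod_insert ha]
    have hip : IndepFun (Y a) (∏ j ∈ t, Y j) P :=
      (hindep.indepFun_finset_prod_of_notMem hm ha).symm
    have hmp : Measurable (∏ j ∈ t, Y j) := by
      rw [show (∏ j ∈ t, Y j) = fun ω => ∏ j ∈ t, Y j ω from funext fun ω => by
        simp [Finset.prod_apply]]
      exact t.measurable_prod (fun i _ => hm i)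
    have : ∫ ω, Y a ω * (∏ i ∈ t, Y i ω) ∂P
        = (∫ ω, Y a ω ∂P) * ∫ ω, ∏ i ∈ t, Y i ω ∂P := by
      have h := hip.integral_mul_eq_mul_integral (hm a).aestronglyMeasurable hmp.aestronglyMeasurable
      have e1 : integral P (Y a * ∏ j ∈ t, Y j) = ∫ ω, Y a ω * ∏ i ∈ t, Y i ω ∂P := by
        congr 1; funext ω; simp [Finset.prod_apply]
      have e2 : integral P (∏ j ∈ t, Y j) = ∫ ω, ∏ i ∈ t, Y i ω ∂P := by
        congr 1; funext ω; simp [Finset.prod_apply]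
      rw [← e1, ← e2]; exact h
    simp only [Finset.prod_insert ha] at *
    rw [this, ih]

lemma gamma_gautschi {x s : ℝ} (hx : 0 < x) (hs0 : 0 ≤ s) (hs1 : s ≤ 1) :
    Real.Gamma (x + s) ≤ Real.Gamma x * x ^ s := by
  have hc := Real.convexOn_log_Gamma
  have h1 : (1 - s) • x + s • (x + 1) = x + s := by simp; ring
  have h2 := hc.2 (Set.mem_Ioi.mpr hx) (Set.mem_Ioi.mpr (by linarith : (0:ℝ) < x + 1))
    (by linarith : (0:ℝ) ≤ 1 - s) hs0 (by ring : (1 - s) + s = 1)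
  rw [h1] at h2
  simp only [Function.comp_apply, smul_eq_mul] at h2
  have hgx := Real.Gamma_pos_of_pos hx
  have hgxs := Real.Gamma_pos_of_pos (by linarith : (0:ℝ) < x + s)
  have hgx1 : Real.Gamma (x + 1) = x * Real.Gamma x := Real.Gamma_add_one hx.ne'
  calc Real.Gamma (x + s) = Real.exp (Real.log (Real.Gamma (x + s))) :=
        (Real.exp_log hgxs).symm
    _ ≤ Real.exp ((1 - s) * Real.log (Real.Gamma x) + s * Real.log (Real.Gamma (x + 1))) :=
        Real.exp_le_exp.mpr h2
    _ = Real.Gamma x * x ^ s := by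
        rw [hgx1, Real.log_mul hx.ne' hgx.ne',
          show (1 - s) * Real.log (Real.Gamma x)
              + s * (Real.log x + Real.log (Real.Gamma x))
            = Real.log (Real.Gamma x) + Real.log x * s by ring, Real.exp_add,
          Real.exp_log hgx, Real.exp_mul, Real.exp_log hx]

lemma prod_gamma {s : ℝ} (hs : 0 < s) :
    ∀ k : ℕ, 1 ≤ k → ∏ i ∈ Finset.Ico 1 k, ((i:ℝ) + s)
      = Real.Gamma (k + s) / Real.Gamma (1 + s) := by
  intro k hk
  induction k, hk using Nat.le_induction with
  | base =>
    simp only [Nat.cast_one, Finset.Ico_self, Finset.prod_empty]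
    rw [div_self (Real.Gamma_pos_of_pos (by linarith : (0:ℝ) < 1 + s)).ne']
  | succ n hn ih =>
    rw [Finset.prod_Ico_succ_top hn, ih]
    have h1 : ((n:ℝ) + s) ≠ 0 := by positivity
    have h2 : Real.Gamma ((n:ℝ) + s + 1) = ((n:ℝ) + s) * Real.Gamma ((n:ℝ) + s) :=
      Real.Gamma_add_one h1
    push_cast
    rw [show (n:ℝ) + 1 + s = (n:ℝ) + s + 1 by ring, h2]
    ring

/-- For the GEM weights `(M_k)` of the Poisson–Dirichlet `(1/α, 1 − 1/α)` distribution,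
`α ∈ (1,2)`, there exist `c > 0` and `k₀` such that `E[M_k] ≥ c k^{−α}` for all `k ≥ k₀`. -/
theorem gem_first_moment_lower
    {Ω : Type*} [MeasurableSpace Ω] (P : Measure Ω) [IsProbabilityMeasure P]
    (α : ℝ) (hα1 : 1 < α) (hα2 : α < 2)
    (Z : ℕ → Ω → ℝ) (hmeas : ∀ n, Measurable (Z n))
    (hindep : iIndepFun Z P)
    (hdist : ∀ n : ℕ, 1 ≤ n →
      P.map (Z n) = betaMeasure' (1 - α⁻¹) ((n : ℝ) * α⁻¹ + (1 - α⁻¹)))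
    (M : ℕ → Ω → ℝ)
    (hM : ∀ n ω, M n ω = (∏ i ∈ Finset.Ico 1 n, (1 - Z i ω)) * Z n ω) :
    ∃ c : ℝ, 0 < c ∧ ∃ k₀ : ℕ, ∀ k : ℕ, k₀ ≤ k →
      c * (k : ℝ) ^ (-α) ≤ ∫ ω, M k ω ∂P := by
  have hα0 : (0:ℝ) < α := by linarith
  set s : ℝ := α - 1 with hsdef
  have hs0 : 0 < s := by simp [hsdef]; linarith
  have hs1 : s < 1 := by simp [hsdef]; linarith
  have ha : (0:ℝ) < 1 - α⁻¹ := by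
    rw [sub_pos, inv_lt_one_iff₀]; right; exact hα1
  have hb : ∀ n : ℕ, 1 ≤ n → (0:ℝ) < (n : ℝ) * α⁻¹ + (1 - α⁻¹) := by
    intro n hn
    have : (0:ℝ) < (n:ℝ) * α⁻¹ := by positivity
    linarith
  -- a.e. boundedness and integrability
  have hbd : ∀ n : ℕ, 1 ≤ n → ∀ᵐ ω ∂P, Z n ω ∈ Set.Icc (0:ℝ) 1 := by
    intro n hn
    have h0 : P.map (Z n) (Set.Icc (0:ℝ) 1)ᶜ = 0 := by
      rw [hdist n hn, betaMeasure', withDensity_apply _ measurableSet_Icc.compl]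
      have hz : (volume.restrict (Set.Icc (0:ℝ) 1)) (Set.Icc (0:ℝ) 1)ᶜ = 0 := by
        rw [Measure.restrict_apply measurableSet_Icc.compl]; simp
      exact setLIntegral_measure_zero _ _ hz
    rw [Measure.map_apply (hmeas n) measurableSet_Icc.compl] at h0
    rw [ae_iff]
    have he : {ω | ¬ Z n ω ∈ Set.Icc (0:ℝ) 1} = Z n ⁻¹' (Set.Icc (0:ℝ) 1)ᶜ := rfl
    rw [he]
    exact h0
  have hint : ∀ n : ℕ, 1 ≤ n → Integrable (Z n) P := by
    intro n hn
    refine Integrable.mono' (integrable_const 1) (hmeas n).aestronglyMeasurable ?_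
    filter_upwards [hbd n hn] with ω hω
    rw [Real.norm_eq_abs, abs_le]
    exact ⟨by linarith [hω.1], hω.2⟩
  -- first moments
  have hEZ : ∀ n : ℕ, 1 ≤ n → ∫ ω, Z n ω ∂P = s / ((n:ℝ) + 2*s) := by
    intro n hn
    have h1 : ∫ ω, Z n ω ∂P = ∫ x, x ∂(P.map (Z n)) :=
      (integral_map (hmeas n).aemeasurable aestronglyMeasurable_id).symm
    rw [h1, hdist n hn, betaMeasure_moment ha (hb n hn)]
    have hα : α ≠ 0 := hα0.ne'
    have e1 : 1 - α⁻¹ = α⁻¹ * s := by field_simp [hsdef]; linarith [hsdef]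
    have e2 : 1 - α⁻¹ + ((n:ℝ) * α⁻¹ + (1 - α⁻¹)) = α⁻¹ * ((n:ℝ) + 2*s) := by
      field_simp [hsdef]; ring
    rw [e2, e1, mul_div_mul_left _ _ (inv_ne_zero hα)]
  have hE1Z : ∀ n : ℕ, 1 ≤ n →
      ∫ ω, (1 - Z n ω) ∂P = ((n:ℝ) + s) / ((n:ℝ) + 2*s) := by
    intro n hn
    have hd : (0:ℝ) < (n:ℝ) + 2*s := by
      have : (1:ℝ) ≤ (n:ℝ) := by exact_mod_cast hn
      linarith
    rw [integral_sub (integrable_const 1) (hint n hn), integral_const]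
    simp only [measure_univ, ENNReal.toReal_one, smul_eq_mul, one_mul]
    rw [hEZ n hn]
    field_simp
    simp only [probReal_univ]
    ring
  -- the key product formula for each k ≥ 1
  have hprod : ∀ k : ℕ, 1 ≤ k → ∫ ω, M k ω ∂P =
      ((∏ i ∈ Finset.Ico 1 k, (((i:ℝ) + s) / ((i:ℝ) + 2*s)))) * (s / ((k:ℝ) + 2*s)) := by
    intro k hk
    classical
    set g : ℕ → ℝ → ℝ := fun i => if i = k then id else fun x => 1 - x with hg
    have hgm : ∀ i, Measurable (g i) := by
      intro i
      by_cases h : i = k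
      · simp [hg, h]; exact measurable_id
      · simp [hg, h]; exact measurable_const.sub measurable_id
    set W : ℕ → Ω → ℝ := fun i => g i ∘ Z i with hW
    have hWindep : iIndepFun W P := hindep.comp g hgm
    have hWmeas : ∀ i, Measurable (W i) := fun i => (hgm i).comp (hmeas i)
    have hMW : ∀ ω, M k ω = ∏ i ∈ Finset.Ico 1 (k+1), W i ω := by
      intro ω
      rw [Finset.prod_Ico_succ_top hk, hM]
      congr 1
      · refine Finset.prod_congr rfl fun i hi => ?_
        have : i ≠ k := (Finset.mem_Ico.mp hi).2.ne
        simp [hW, hg, this]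
      · simp [hW, hg]
    have h2 : ∫ ω, M k ω ∂P = ∏ i ∈ Finset.Ico 1 (k+1), ∫ ω, W i ω ∂P := by
      rw [show (fun ω => M k ω) = fun ω => ∏ i ∈ Finset.Ico 1 (k+1), W i ω from
        funext hMW]
      exact integral_prod_indep P W hWindep hWmeas _
    rw [h2, Finset.prod_Ico_succ_top hk]
    congr 1
    · refine Finset.prod_congr rfl fun i hi => ?_
      obtain ⟨hi1, hi2⟩ := Finset.mem_Ico.mp hi
      have hik : i ≠ k := hi2.ne
      have : ∫ ω, W i ω ∂P = ∫ ω, (1 - Z i ω) ∂P := by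
        congr 1; funext ω; simp [hW, hg, hik]
      rw [this, hE1Z i hi1]
    · have : ∫ ω, W k ω ∂P = ∫ ω, Z k ω ∂P := by
        congr 1; funext ω; simp [hW, hg]
      rw [this, hEZ k hk]
  -- Gamma form of the product
  have hs20 : (0:ℝ) < 2*s := by linarith
  have hG1 : (0:ℝ) < Real.Gamma (1 + s) := Real.Gamma_pos_of_pos (by linarith)
  have hG2 : (0:ℝ) < Real.Gamma (1 + 2*s) := Real.Gamma_pos_of_pos (by linarith)
  refine ⟨Real.Gamma (1 + 2*s) * s / (Real.Gamma (1 + s) * 4), by positivity, 2, ?_⟩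
  intro k hk2
  have hk1 : 1 ≤ k := le_trans (by norm_num) hk2
  have hk0 : (0:ℝ) < (k:ℝ) := by exact_mod_cast Nat.lt_of_lt_of_le Nat.zero_lt_one hk1
  have hkR : (2:ℝ) ≤ (k:ℝ) := by exact_mod_cast hk2
  have hGk1 : (0:ℝ) < Real.Gamma ((k:ℝ) + s) := Real.Gamma_pos_of_pos (by linarith)
  have hGk2 : (0:ℝ) < Real.Gamma ((k:ℝ) + 2*s) := Real.Gamma_pos_of_pos (by linarith)
  have hsplit : ∏ i ∈ Finset.Ico 1 k, (((i:ℝ) + s) / ((i:ℝ) + 2*s))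
      = (Real.Gamma ((k:ℝ) + s) / Real.Gamma (1 + s)) /
        (Real.Gamma ((k:ℝ) + 2*s) / Real.Gamma (1 + 2*s)) := by
    rw [Finset.prod_div_distrib, prod_gamma hs0 k hk1, prod_gamma hs20 k hk1]
  rw [hprod k hk1, hsplit]
  -- now the purely analytic lower bound
  have hgaut : Real.Gamma ((k:ℝ) + 2*s) ≤
      Real.Gamma ((k:ℝ) + s) * ((k:ℝ) + s) ^ s := by
    have := gamma_gautschi (x := (k:ℝ) + s) (by linarith) hs0.le hs1.le
    rwa [show (k:ℝ) + s + s = (k:ℝ) + 2*s by ring] at this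
  have hratio : ((k:ℝ) + s) ^ (-s) ≤
      Real.Gamma ((k:ℝ) + s) / Real.Gamma ((k:ℝ) + 2*s) := by
    have h1 : Real.Gamma ((k:ℝ) + s) / (Real.Gamma ((k:ℝ) + s) * ((k:ℝ) + s) ^ s)
        ≤ Real.Gamma ((k:ℝ) + s) / Real.Gamma ((k:ℝ) + 2*s) := by
      gcongr
    have h2 : Real.Gamma ((k:ℝ) + s) / (Real.Gamma ((k:ℝ) + s) * ((k:ℝ) + s) ^ s)
        = ((k:ℝ) + s) ^ (-s) := by
      rw [Real.rpow_neg (by linarith : (0:ℝ) ≤ (k:ℝ) + s)]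
      rw [eq_comm, inv_eq_iff_eq_inv, eq_comm, inv_div]
      field_simp
    rwa [h2] at h1
  have hks : (0:ℝ) < (k:ℝ) + s := by linarith
  have hk2s : (0:ℝ) < (k:ℝ) + 2*s := by linarith
  have key : (1/4 : ℝ) * (k:ℝ) ^ (-α) ≤
      ((k:ℝ) + s) ^ (-s) * (1 / ((k:ℝ) + 2*s)) := by
    have e1 : (k:ℝ) ^ (-α) = 1 / ((k:ℝ) ^ s * (k:ℝ)) := by
      rw [Real.rpow_neg hk0.le, show α = s + 1 by simp [hsdef],
        Real.rpow_add hk0, Real.rpow_one, one_div]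
    have h2s : ((2:ℝ)*(k:ℝ)) ^ s ≤ 2 * (k:ℝ) ^ s := by
      rw [Real.mul_rpow (by norm_num) hk0.le]
      gcongr
      calc (2:ℝ) ^ s ≤ (2:ℝ) ^ (1:ℝ) :=
            Real.rpow_le_rpow_of_exponent_le one_le_two hs1.le
        _ = 2 := Real.rpow_one 2
    have hkspow : (0:ℝ) < ((k:ℝ) + s) ^ s := Real.rpow_pos_of_pos hks s
    calc (1/4 : ℝ) * (k:ℝ) ^ (-α) = 1 / (4 * ((k:ℝ) ^ s * (k:ℝ))) := by
          rw [e1]; ring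
      _ ≤ 1 / ((((k:ℝ) + s) ^ s) * ((k:ℝ) + 2*s)) := by
          apply one_div_le_one_div_of_le
          · positivity
          calc (((k:ℝ) + s) ^ s) * ((k:ℝ) + 2*s)
              ≤ (((2:ℝ)*(k:ℝ)) ^ s) * ((2:ℝ)*(k:ℝ)) := by
                have hA : (((k:ℝ) + s) ^ s) ≤ ((2:ℝ)*(k:ℝ)) ^ s :=
                  Real.rpow_le_rpow hks.le (by linarith) hs0.le
                have hB : (k:ℝ) + 2*s ≤ (2:ℝ)*(k:ℝ) := by linarith
                exact mul_le_mul hA hB hk2s.le (by positivity)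
            _ ≤ (2 * (k:ℝ) ^ s) * ((2:ℝ)*(k:ℝ)) := by gcongr
            _ = 4 * ((k:ℝ) ^ s * (k:ℝ)) := by ring
      _ = ((k:ℝ) + s) ^ (-s) * (1 / ((k:ℝ) + 2*s)) := by
          rw [Real.rpow_neg hks.le]
          field_simp
  -- assemble
  have main : (1/4 : ℝ) * (k:ℝ) ^ (-α) ≤
      (Real.Gamma ((k:ℝ) + s) / Real.Gamma ((k:ℝ) + 2*s)) * (1 / ((k:ℝ) + 2*s)) := by
    refine key.trans ?_
    gcongr
  have expand : (Real.Gamma ((k:ℝ) + s) / Real.Gamma (1 + s)) /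
        (Real.Gamma ((k:ℝ) + 2*s) / Real.Gamma (1 + 2*s)) * (s / ((k:ℝ) + 2*s))
      = (Real.Gamma (1 + 2*s) * s / Real.Gamma (1 + s)) *
        ((Real.Gamma ((k:ℝ) + s) / Real.Gamma ((k:ℝ) + 2*s)) * (1 / ((k:ℝ) + 2*s))) := by
    field_simp
  rw [expand]
  calc Real.Gamma (1 + 2*s) * s / (Real.Gamma (1 + s) * 4) * (k:ℝ) ^ (-α)
      = (Real.Gamma (1 + 2*s) * s / Real.Gamma (1 + s)) * ((1/4) * (k:ℝ) ^ (-α)) := by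
        ring
    _ ≤ (Real.Gamma (1 + 2*s) * s / Real.Gamma (1 + s)) *
        ((Real.Gamma ((k:ℝ) + s) / Real.Gamma ((k:ℝ) + 2*s)) * (1 / ((k:ℝ) + 2*s))) := by
        apply mul_le_mul_of_nonneg_left main
        positivity
end

section
/- Let α ∈ (1,2) and let (M_n)_{n≥1} be the GEM weights of the Poisson–Dirichlet(1/α, 1 − 1/α) distribution as in the context. Then there exists a constant C > 0 such that for all integers k ≥ 1, the second moment satisfies E[M_k²] ≤ C·k^{−2α}. -/
open MeasureTheory ProbabilityTheory Finset
open scoped ENNReal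

/-- The Beta distribution on `[0,1]` with parameters `a, b`, defined via its density
`x^(a-1) (1-x)^(b-1) / B(a,b)` with respect to Lebesgue measure on `[0,1]`,
where `B(a,b) = Γ(a)Γ(b)/Γ(a+b)`. -/
noncomputable def betaMeasure (a b : ℝ) : Measure ℝ :=
  (volume.restrict (Set.Icc (0:ℝ) 1)).withDensity fun x =>
    ENNReal.ofReal (x ^ (a - 1) * (1 - x) ^ (b - 1) /
      (Real.Gamma a * Real.Gamma b / Real.Gamma (a + b)))

section aux

lemma real_betaIntegral {a b : ℝ} (ha : 0 < a) (hb : 0 < b) :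
    ∫ x in (0:ℝ)..1, x ^ (a-1) * (1-x) ^ (b-1)
      = Real.Gamma a * Real.Gamma b / Real.Gamma (a+b) := by
  have h := Complex.Gamma_mul_Gamma_eq_betaIntegral (s := (a:ℂ)) (t := (b:ℂ))
    (by simpa using ha) (by simpa using hb)
  have hbeta : Complex.betaIntegral (a:ℂ) (b:ℂ)
      = ((∫ x in (0:ℝ)..1, x ^ (a-1) * (1-x) ^ (b-1) : ℝ) : ℂ) := by
    rw [Complex.betaIntegral, ← intervalIntegral.integral_ofReal]
    refine intervalIntegral.integral_congr fun x hx => ?_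
    rw [Set.uIcc_of_le (by norm_num : (0:ℝ) ≤ 1)] at hx
    rw [Complex.ofReal_mul, Complex.ofReal_cpow hx.1,
      Complex.ofReal_cpow (by linarith [hx.2] : (0:ℝ) ≤ 1 - x)]
    push_cast
    ring
  rw [hbeta, ← Complex.ofReal_add, Complex.Gamma_ofReal, Complex.Gamma_ofReal,
    Complex.Gamma_ofReal, ← Complex.ofReal_mul, ← Complex.ofReal_mul] at h
  have h2 := Complex.ofReal_inj.mp h
  have hG : Real.Gamma (a+b) ≠ 0 := (Real.Gamma_pos_of_pos (by linarith)).ne'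
  field_simp
  linarith [h2]

lemma betaMeasure_integral_eq (a b : ℝ)
    (hB : 0 < Real.Gamma a * Real.Gamma b / Real.Gamma (a+b)) (g : ℝ → ℝ) :
    ∫ x, g x ∂(_root_.betaMeasure a b)
      = ∫ x in (0:ℝ)..1,
          (x ^ (a-1) * (1-x) ^ (b-1) / (Real.Gamma a * Real.Gamma b / Real.Gamma (a+b))) * g x := by
  set B := Real.Gamma a * Real.Gamma b / Real.Gamma (a+b) with hBdef
  have hf : Measurable fun x : ℝ => (x ^ (a-1) * (1-x) ^ (b-1) / B).toNNReal :=
    (((measurable_id.pow_const _).mul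
      ((measurable_const.sub measurable_id).pow_const _)).div_const _).real_toNNReal
  rw [_root_.betaMeasure]
  rw [show (fun x : ℝ => ENNReal.ofReal (x ^ (a-1) * (1-x) ^ (b-1) / B))
      = fun x : ℝ => ((x ^ (a-1) * (1-x) ^ (b-1) / B).toNNReal : ℝ≥0∞) from rfl]
  rw [integral_withDensity_eq_integral_smul hf g]
  rw [intervalIntegral.integral_of_le (by norm_num : (0:ℝ) ≤ 1),
    ← integral_Icc_eq_integral_Ioc]
  refine setIntegral_congr_fun measurableSet_Icc fun x hx => ?_
  have h0 : 0 ≤ x ^ (a-1) * (1-x) ^ (b-1) / B :=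
    div_nonneg (mul_nonneg (Real.rpow_nonneg hx.1 _)
      (Real.rpow_nonneg (by linarith [hx.2]) _)) hB.le
  simp [NNReal.smul_def, Real.coe_toNNReal _ h0]

lemma Gamma_pos' {x : ℝ} (hx : 0 < x) : 0 < Real.Gamma x := Real.Gamma_pos_of_pos hx

lemma betaMeasure_integral_sq {a b : ℝ} (ha : 0 < a) (hb : 0 < b) :
    ∫ x, x^2 ∂(_root_.betaMeasure a b) = a*(a+1)/((a+b)*(a+b+1)) := by
  have hGa := Gamma_pos' ha
  have hGb := Gamma_pos' hb
  have hGab := Gamma_pos' (by linarith : (0:ℝ) < a + b)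
  have hB : 0 < Real.Gamma a * Real.Gamma b / Real.Gamma (a+b) :=
    div_pos (mul_pos hGa hGb) hGab
  rw [betaMeasure_integral_eq a b hB]
  have key : ∫ x in (0:ℝ)..1,
      (x ^ (a-1) * (1-x) ^ (b-1) / (Real.Gamma a * Real.Gamma b / Real.Gamma (a+b))) * x^2
      = (∫ x in (0:ℝ)..1, x ^ ((a+2)-1) * (1-x) ^ (b-1))
          / (Real.Gamma a * Real.Gamma b / Real.Gamma (a+b)) := by
    rw [← intervalIntegral.integral_div]
    refine intervalIntegral.integral_congr fun x hx => ?_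
    rw [Set.uIcc_of_le (by norm_num : (0:ℝ) ≤ 1)] at hx
    have hx2 : x ^ (a-1) * x^2 = x ^ ((a+2)-1) := by
      rcases eq_or_lt_of_le hx.1 with h | h
      · rw [← h]
        rw [Real.zero_rpow (by linarith : (a+2)-1 ≠ 0)]
        ring
      · rw [show (x:ℝ)^2 = x ^ ((2:ℕ):ℝ) by rw [Real.rpow_natCast],
          ← Real.rpow_add h]
        norm_num
        ring_nf
    field_simp
    linear_combination (1-x) ^ (b-1) * hx2
  rw [key, real_betaIntegral (by linarith : (0:ℝ) < a+2) hb]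
  have e1 : a + 2 = (a+1)+1 := by ring
  have e2 : (a+2)+b = (a+b+1)+1 := by ring
  rw [e1, Real.Gamma_add_one (by linarith), Real.Gamma_add_one ha.ne', ← e1, e2,
    Real.Gamma_add_one (by linarith), Real.Gamma_add_one (by linarith : a+b ≠ 0)]
  field_simp

lemma betaMeasure_integral_one_sub_sq {a b : ℝ} (ha : 0 < a) (hb : 0 < b) :
    ∫ x, (1-x)^2 ∂(_root_.betaMeasure a b) = b*(b+1)/((a+b)*(a+b+1)) := by
  have hGa := Gamma_pos' ha
  have hGb := Gamma_pos' hb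
  have hGab := Gamma_pos' (by linarith : (0:ℝ) < a + b)
  have hB : 0 < Real.Gamma a * Real.Gamma b / Real.Gamma (a+b) :=
    div_pos (mul_pos hGa hGb) hGab
  rw [betaMeasure_integral_eq a b hB (fun x => (1-x)^2)]
  have key : ∫ x in (0:ℝ)..1,
      (x ^ (a-1) * (1-x) ^ (b-1) / (Real.Gamma a * Real.Gamma b / Real.Gamma (a+b))) * (1-x)^2
      = (∫ x in (0:ℝ)..1, x ^ (a-1) * (1-x) ^ ((b+2)-1))
          / (Real.Gamma a * Real.Gamma b / Real.Gamma (a+b)) := by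
    rw [← intervalIntegral.integral_div]
    refine intervalIntegral.integral_congr fun x hx => ?_
    rw [Set.uIcc_of_le (by norm_num : (0:ℝ) ≤ 1)] at hx
    have hx2 : (1-x) ^ (b-1) * (1-x)^2 = (1-x) ^ ((b+2)-1) := by
      rcases eq_or_lt_of_le hx.2 with h | h
      · rw [h]
        simp only [sub_self]
        rw [Real.zero_rpow (by linarith : (b+2)-1 ≠ 0)]
        ring
      · have h1 : (0:ℝ) < 1 - x := by linarith
        rw [show ((1:ℝ)-x)^2 = (1-x) ^ ((2:ℕ):ℝ) by rw [Real.rpow_natCast],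
          ← Real.rpow_add h1]
        norm_num
        ring_nf
    field_simp
    linear_combination x ^ (a-1) * hx2
  rw [key, real_betaIntegral ha (by linarith : (0:ℝ) < b+2)]
  have e1 : b + 2 = (b+1)+1 := by ring
  have e2 : a+(b+2) = (a+b+1)+1 := by ring
  rw [e1, Real.Gamma_add_one (by linarith), Real.Gamma_add_one hb.ne', ← e1, e2,
    Real.Gamma_add_one (by linarith), Real.Gamma_add_one (by linarith : a+b ≠ 0)]
  field_simp

lemma integral_indep_prod {Ω : Type*} [MeasurableSpace Ω] (P : Measure Ω)
    [IsProbabilityMeasure P] (f : ℕ → Ω → ℝ)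
    (hind : iIndepFun f P)
    (hmeas : ∀ i, Measurable (f i)) (hpos : ∀ i ω, 0 ≤ f i ω) (s : Finset ℕ) :
    ∫ ω, ∏ i ∈ s, f i ω ∂P = ∏ i ∈ s, ∫ ω, f i ω ∂P := by
  classical
  induction s using Finset.induction_on with
  | empty => simp
  | @insert j t hj ih =>
    have hIndep : IndepFun (∏ i ∈ t, f i) (f j) P :=
      hind.indepFun_finsetProd_of_notMem hmeas hj
    have hprodmeas : Measurable (∏ i ∈ t, f i) := by
      rw [show (∏ i ∈ t, f i) = fun ω => ∏ i ∈ t, f i ω from funext fun ω => Finset.prod_apply ..]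
      exact Finset.measurable_prod t (fun i _ => hmeas i)
    have h1 : ∫ ω, ∏ i ∈ insert j t, f i ω ∂P
        = ∫ ω, ((∏ i ∈ t, f i) * f j) ω ∂P := by
      refine integral_congr_ae (ae_of_all _ fun ω => ?_)
      simp [Finset.prod_insert hj, Finset.prod_apply]
      ring
    rw [h1, hIndep.integral_mul_eq_mul_integral
      hprodmeas.aestronglyMeasurable (hmeas j).aestronglyMeasurable,
      Finset.prod_insert hj]
    have : integral P (∏ i ∈ t, f i) = ∫ ω, ∏ i ∈ t, f i ω ∂P :=
      integral_congr_ae (ae_of_all _ fun ω => Finset.prod_apply ..)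
    rw [this, ih]
    ring

lemma ratio_le {x p c : ℝ} (hx : 0 < x) (hp : 0 < p) (hc : 0 < c) :
    x / (x + p) ≤ ((x + p) / (x + p + c)) ^ (p / c) := by
  have hxp : 0 < x + p := by linarith
  have hxpc : 0 < x + p + c := by linarith
  have hA : 0 < (x + p) / (x + p + c) := div_pos hxp hxpc
  have hL : 0 < x / (x + p) := div_pos hx hxp
  rw [Real.rpow_def_of_pos hA, ← Real.exp_log hL]
  apply Real.exp_le_exp.mpr
  rw [Real.log_div hx.ne' hxp.ne', Real.log_div hxp.ne' hxpc.ne']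
  have h1 : Real.log (x + p + c) - Real.log (x + p) ≤ c / (x + p) := by
    have := Real.log_le_sub_one_of_pos (show 0 < (x+p+c)/(x+p) from div_pos hxpc hxp)
    rw [Real.log_div hxpc.ne' hxp.ne'] at this
    calc Real.log (x+p+c) - Real.log (x+p) ≤ (x+p+c)/(x+p) - 1 := this
      _ = c / (x+p) := by field_simp; ring
  have h2 : p / (x + p) ≤ Real.log (x + p) - Real.log x := by
    have := Real.log_le_sub_one_of_pos (show 0 < x/(x+p) from div_pos hx hxp)
    rw [Real.log_div hx.ne' hxp.ne'] at this
    have h3 : x/(x+p) - 1 = -(p/(x+p)) := by field_simp; ring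
    linarith [this, h3]
  have h4 : p / c * (Real.log (x+p) - Real.log (x+p+c)) ≥ -(p/(x+p)) := by
    have := mul_le_mul_of_nonneg_left h1 (le_of_lt (div_pos hp hc))
    have he : p / c * (c / (x+p)) = p/(x+p) := by field_simp
    nlinarith [this, he]
  nlinarith [h2, h4]

end aux


set_option maxHeartbeats 2000000 in
/-- For the GEM weights `(M_k)` of the Poisson–Dirichlet `(1/α, 1 − 1/α)` distribution,
`α ∈ (1,2)`, there is a constant `C > 0` with `E[M_k²] ≤ C k^{−2α}` for all `k ≥ 1`. -/
theorem gem_second_moment_upper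
    {Ω : Type*} [MeasurableSpace Ω] (P : Measure Ω) [IsProbabilityMeasure P]
    (α : ℝ) (hα1 : 1 < α) (hα2 : α < 2)
    (Z : ℕ → Ω → ℝ) (hmeas : ∀ n, Measurable (Z n))
    (hindep : iIndepFun Z P)
    (hdist : ∀ n : ℕ, 1 ≤ n →
      P.map (Z n) = _root_.betaMeasure (1 - α⁻¹) ((n : ℝ) * α⁻¹ + (1 - α⁻¹)))
    (M : ℕ → Ω → ℝ)
    (hM : ∀ n ω, M n ω = (∏ i ∈ Finset.Ico 1 n, (1 - Z i ω)) * Z n ω) :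
    ∃ C : ℝ, 0 < C ∧ ∀ k : ℕ, 1 ≤ k →
      ∫ ω, (M k ω) ^ 2 ∂P ≤ C * (k : ℝ) ^ (-(2 * α)) := by
  classical
  set β : ℝ := α⁻¹ with hβdef
  have hα0 : 0 < α := by linarith
  have hβ0 : 0 < β := inv_pos.mpr hα0
  have hβ1 : β < 1 := by
    rw [hβdef]
    exact inv_lt_one_of_one_lt₀ hα1
  have hβα : β * α = 1 := inv_mul_cancel₀ hα0.ne'
  set a : ℝ := 1 - β with hadef
  have ha0 : 0 < a := by simp only [hadef]; linarith
  have ha1 : a < 1 := by simp only [hadef]; linarith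
  set b : ℕ → ℝ := fun i => (i : ℝ) * β + (1 - β) with hbdef
  have hb1 : ∀ i : ℕ, 1 ≤ i → 1 ≤ b i := by
    intro i hi
    have : (1:ℝ) ≤ (i:ℝ) := by exact_mod_cast hi
    simp only [hbdef]
    nlinarith
  -- moments
  set e : ℕ → ℝ := fun i => b i * (b i + 1) / ((a + b i) * (a + b i + 1)) with hedef
  set q : ℕ → ℝ := fun i => a * (a + 1) / ((a + b i) * (a + b i + 1)) with hqdef
  have hmom1 : ∀ i : ℕ, 1 ≤ i → ∫ ω, (1 - Z i ω)^2 ∂P = e i := by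
    intro i hi
    have h1 : ∫ ω, (1 - Z i ω)^2 ∂P = ∫ x, (1-x)^2 ∂(P.map (Z i)) := by
      rw [integral_map (hmeas i).aemeasurable]
      exact ((measurable_const.sub measurable_id).pow_const 2).aestronglyMeasurable
    rw [h1, hdist i hi]
    refine betaMeasure_integral_one_sub_sq ha0 ?_
    have h := hb1 i hi
    simp only [hbdef] at h
    linarith [hadef]
  have hmom2 : ∀ i : ℕ, 1 ≤ i → ∫ ω, (Z i ω)^2 ∂P = q i := by
    intro i hi
    have h1 : ∫ ω, (Z i ω)^2 ∂P = ∫ x, x^2 ∂(P.map (Z i)) := by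
      rw [integral_map (hmeas i).aemeasurable]
      exact (measurable_id.pow_const 2).aestronglyMeasurable
    rw [h1, hdist i hi]
    refine betaMeasure_integral_sq ha0 ?_
    have h := hb1 i hi
    simp only [hbdef] at h
    linarith [hadef]
  -- step A: product formula
  have stepA : ∀ k : ℕ, 1 ≤ k →
      ∫ ω, (M k ω)^2 ∂P = (∏ i ∈ Finset.Ico 1 k, e i) * q k := by
    intro k hk
    set g : ℕ → ℝ → ℝ := fun i x => if i = k then x^2 else (1-x)^2 with hgdef
    have hg : ∀ i, Measurable (g i) := by
      intro i
      by_cases h : i = k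
      · simp only [hgdef, h, if_true]
        exact measurable_id.pow_const 2
      · simp only [hgdef, h, if_false]
        exact (measurable_const.sub measurable_id).pow_const 2
    set V : ℕ → Ω → ℝ := fun i => (g i) ∘ (Z i) with hVdef
    have hindepV : iIndepFun V P := hindep.comp g hg
    have hmeasV : ∀ i, Measurable (V i) := fun i => (hg i).comp (hmeas i)
    have hposV : ∀ i ω, 0 ≤ V i ω := by
      intro i ω
      simp only [hVdef, Function.comp_apply, hgdef]
      split <;> positivity
    have hMsq : ∀ ω, (M k ω)^2 = ∏ i ∈ Finset.Ico 1 (k+1), V i ω := by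
      intro ω
      rw [Finset.prod_Ico_succ_top hk]
      have hVk : V k ω = (Z k ω)^2 := by simp [hVdef, hgdef]
      have hVi : ∏ i ∈ Finset.Ico 1 k, V i ω = ∏ i ∈ Finset.Ico 1 k, (1 - Z i ω)^2 := by
        refine Finset.prod_congr rfl fun i hi => ?_
        have : i ≠ k := Nat.ne_of_lt (Finset.mem_Ico.mp hi).2
        simp [hVdef, hgdef, this]
      rw [hVk, hVi, hM k ω, mul_pow, Finset.prod_pow]
    calc ∫ ω, (M k ω)^2 ∂P = ∫ ω, ∏ i ∈ Finset.Ico 1 (k+1), V i ω ∂P := by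
          exact integral_congr_ae (ae_of_all _ fun ω => hMsq ω)
      _ = ∏ i ∈ Finset.Ico 1 (k+1), ∫ ω, V i ω ∂P :=
          integral_indep_prod P V hindepV hmeasV hposV _
      _ = (∏ i ∈ Finset.Ico 1 k, ∫ ω, V i ω ∂P) * ∫ ω, V k ω ∂P := by
          rw [Finset.prod_Ico_succ_top hk]
      _ = (∏ i ∈ Finset.Ico 1 k, e i) * q k := by
          congr 1
          · refine Finset.prod_congr rfl fun i hi => ?_
            obtain ⟨hi1, hi2⟩ := Finset.mem_Ico.mp hi
            have hne : i ≠ k := Nat.ne_of_lt hi2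
            rw [show (fun ω => V i ω) = fun ω => (1 - Z i ω)^2 by
              funext ω; simp [hVdef, hgdef, hne]]
            exact hmom1 i hi1
          · rw [show (fun ω => V k ω) = fun ω => (Z k ω)^2 by
              funext ω; simp [hVdef, hgdef]]
            exact hmom2 k hk
  -- positivity facts
  have hsi : ∀ i : ℕ, 1 ≤ i → 0 < a + b i := fun i hi => by linarith [hb1 i hi]
  have hepos : ∀ i : ℕ, 1 ≤ i → 0 ≤ e i := by
    intro i hi
    have h1 := hb1 i hi
    have h2 := hsi i hi
    simp only [hedef]
    positivity
  -- inductive bound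
  have bound : ∀ k : ℕ, 1 ≤ k →
      (∏ i ∈ Finset.Ico 1 k, e i) * q k ≤ (3 / (β * ((k:ℝ) - 1) + 3)) ^ (2*α) := by
    intro k hk
    induction k, hk using Nat.le_induction with
    | base =>
      simp only [Finset.Ico_self, Finset.prod_empty, one_mul]
      have hb1' : b 1 = 1 := by simp [hbdef]
      have : q 1 = a / (a + 2) := by
        rw [hqdef]
        simp only
        rw [hb1']
        rw [div_eq_div_iff (by nlinarith : ((a+1)*(a+1+1) : ℝ) ≠ 0) (by intro h; linarith : ((a+2:ℝ)) ≠ 0)]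
        ring
      rw [this]
      have h1 : β * ((1:ℕ) - 1 : ℝ) + 3 = 3 := by norm_num
      rw [h1, div_self (by norm_num : (3:ℝ) ≠ 0), Real.one_rpow]
      rw [div_le_one (by linarith)]
      linarith
    | succ k hk ih =>
      have hbk := hb1 k hk
      have hbk0 : 0 < b k := by linarith
      have hsk := hsi k hk
      have hsk1 := hsi (k+1) (by omega)
      -- key algebraic identity
      have hbsucc : b (k+1) = b k + β := by
        simp only [hbdef]
        push_cast
        ring
      have hskey : a + b (k+1) = b k + 1 := by
        rw [hbsucc]
        simp only [hadef]
        ring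
      have hqe : e k * q (k+1) = q k * (b k / (b k + 2)) := by
        simp only [hedef, hqdef, hskey]
        have hne1 : a + b k ≠ 0 := hsk.ne'
        have hne2 : a + b k + 1 ≠ 0 := by linarith
        have hne3 : b k + 1 ≠ 0 := by linarith
        have hne4 : b k + 2 ≠ 0 := by linarith
        field_simp
        ring
      have hLHS : (∏ i ∈ Finset.Ico 1 (k+1), e i) * q (k+1)
          = ((∏ i ∈ Finset.Ico 1 k, e i) * q k) * (b k / (b k + 2)) := by
        rw [Finset.prod_Ico_succ_top hk]
        calc (∏ i ∈ Finset.Ico 1 k, e i) * e k * q (k+1)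
            = (∏ i ∈ Finset.Ico 1 k, e i) * (e k * q (k+1)) := by ring
          _ = (∏ i ∈ Finset.Ico 1 k, e i) * (q k * (b k / (b k + 2))) := by rw [hqe]
          _ = ((∏ i ∈ Finset.Ico 1 k, e i) * q k) * (b k / (b k + 2)) := by ring
      rw [hLHS]
      have hfac : b k / (b k + 2) ≤ ((b k + 2) / (b k + 2 + β)) ^ (2*α) := by
        have := ratio_le hbk0 (by norm_num : (0:ℝ) < 2) hβ0
        have h2β : (2:ℝ) / β = 2 * α := by
          rw [hβdef]
          field_simp
        rwa [h2β] at this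
      have hfacpos : 0 ≤ b k / (b k + 2) := div_nonneg hbk0.le (by linarith)
      have hk1' : (1:ℝ) ≤ (k:ℝ) := by exact_mod_cast hk
      have hd1' : (0:ℝ) < β * ((k:ℝ) - 1) + 3 := by nlinarith
      have hboundpos : (0:ℝ) ≤ (3 / (β * ((k:ℝ) - 1) + 3)) ^ (2*α) :=
        Real.rpow_nonneg (div_nonneg (by norm_num) hd1'.le) _
      calc ((∏ i ∈ Finset.Ico 1 k, e i) * q k) * (b k / (b k + 2))
          ≤ (3 / (β * ((k:ℝ) - 1) + 3)) ^ (2*α) * (b k / (b k + 2)) :=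
            mul_le_mul_of_nonneg_right ih hfacpos
        _ ≤ (3 / (β * ((k:ℝ) - 1) + 3)) ^ (2*α) * ((b k + 2) / (b k + 2 + β)) ^ (2*α) :=
            mul_le_mul_of_nonneg_left hfac hboundpos
        _ = ((3 / (β * ((k:ℝ) - 1) + 3)) * ((b k + 2) / (b k + 2 + β))) ^ (2*α) := by
            rw [← Real.mul_rpow (div_nonneg (by norm_num) hd1'.le)
              (div_nonneg (by linarith) (by linarith [hβ0]))]
        _ = (3 / (β * (((k:ℕ)+1:ℝ) - 1) + 3)) ^ (2*α) := by
            congr 1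
            have hb2 : b k + 2 = β * ((k:ℝ) - 1) + 3 := by
              simp only [hbdef]; ring
            have hd1 : 0 < β * ((k:ℝ) - 1) + 3 := by
              have : (1:ℝ) ≤ (k:ℝ) := by exact_mod_cast hk
              nlinarith
            rw [show β * (((k:ℕ):ℝ)+1 - 1) + 3 = (β * ((k:ℝ) - 1) + 3) + β from by ring,
              hb2]
            have hd2 : (β * ((k:ℝ) - 1) + 3) + β ≠ 0 := by linarith
            field_simp
        _ = (3 / (β * ((((k+1):ℕ):ℝ) - 1) + 3)) ^ (2*α) := by push_cast; ring_nf
  -- final bound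
  refine ⟨(3*α) ^ (2*α), Real.rpow_pos_of_pos (by linarith) _, fun k hk => ?_⟩
  have hk1 : (1:ℝ) ≤ (k:ℝ) := by exact_mod_cast hk
  have hkpos : (0:ℝ) < (k:ℝ) := by linarith
  rw [stepA k hk]
  refine le_trans (bound k hk) ?_
  have hden : 0 < β * ((k:ℝ) - 1) + 3 := by nlinarith
  have h1 : 3 / (β * ((k:ℝ) - 1) + 3) ≤ 3 * α / (k:ℝ) := by
    have hβk : 0 < β * (k:ℝ) := by positivity
    have hle : β * (k:ℝ) ≤ β * ((k:ℝ) - 1) + 3 := by nlinarith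
    calc 3 / (β * ((k:ℝ) - 1) + 3) ≤ 3 / (β * (k:ℝ)) :=
          div_le_div_of_nonneg_left (by norm_num) hβk hle
      _ = 3 * α / (k:ℝ) := by
          rw [hβdef, show α⁻¹ * (k:ℝ) = (k:ℝ)/α from (div_eq_inv_mul _ _).symm,
            div_div_eq_mul_div]
  calc (3 / (β * ((k:ℝ) - 1) + 3)) ^ (2*α)
      ≤ (3 * α / (k:ℝ)) ^ (2*α) :=
        Real.rpow_le_rpow (div_nonneg (by norm_num) hden.le) h1 (by linarith)
    _ = (3*α) ^ (2*α) * (k:ℝ) ^ (-(2*α)) := by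
        rw [Real.div_rpow (by linarith) hkpos.le, Real.rpow_neg hkpos.le, div_eq_mul_inv]
end
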